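/- Let A be an n×n matrix satisfying Assumption A1. Then there exists a constant s ∈ (0,1), depending only on A, such that for every vector c = (c_1,…,c_n) with c_i ∈ [0,1] for all i, λ_max(I(c) AᵀA I(c)) ≤ 1 − s Σ_{i=1}^n (1 − c_i²), where I(c) = diag{c_1,…,c_n}. -/

import Mathlib

open Matrix BigOperators

/-- The largest eigenvalue of a symmetric real matrix, characterized as the supremum
of the Rayleigh quotient `xᵀ M x` over unit vectors `x`. -/
noncomputable def lambdaMax {ι : Type*} [Fintype ι] (M : Matrix ι ι ℝ) : ℝ :=
  sSup {r : ℝ | ∃ x : ι → ℝ, ∑ i, x i ^ 2 = 1 ∧ r = x ⬝ᵥ M.mulVec x}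

lemma pow_entry_nonneg {n : ℕ} (B : Matrix (Fin n) (Fin n) ℝ)
    (hBnn : ∀ j k, 0 ≤ B j k) : ∀ (m : ℕ) (j k : Fin n), 0 ≤ (B ^ m) j k := by
  intro m
  induction m with
  | zero => intro j k; by_cases h : j = k <;> simp [pow_zero, Matrix.one_apply, h]
  | succ m ih =>
    intro j k
    rw [pow_succ, Matrix.mul_apply]
    exact Finset.sum_nonneg fun i _ => mul_nonneg (ih j i) (hBnn i k)

lemma path_bound {n : ℕ} (B : Matrix (Fin n) (Fin n) ℝ)
    (hBnn : ∀ j k, 0 ≤ B j k) :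
    ∀ (k : ℕ) (q p : Fin n), 0 < (B ^ k) q p →
      ∀ (y : Fin n → ℝ) (t : ℝ), 0 ≤ t → (∀ a b, 0 < B a b → |y a - y b| ≤ t) →
      |y q - y p| ≤ k * t := by
  intro k
  induction k with
  | zero =>
    intro q p h y t ht _
    rw [pow_zero] at h
    by_cases hqp : q = p
    · subst hqp; simp
    · rw [Matrix.one_apply_ne hqp] at h; exact absurd h (lt_irrefl 0)
  | succ k ih =>
    intro q p h y t ht hedge
    rw [pow_succ, Matrix.mul_apply] at h
    have : ∃ m, 0 < (B ^ k) q m * B m p := by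
      by_contra hcon
      push_neg at hcon
      have : (∑ m, (B ^ k) q m * B m p) ≤ 0 := Finset.sum_nonpos fun m _ => hcon m
      linarith
    obtain ⟨m, hm⟩ := this
    have h1 : 0 < (B ^ k) q m := by
      rcases lt_or_eq_of_le (pow_entry_nonneg B hBnn k q m) with h' | h'
      · exact h'
      · exfalso; rw [← h'] at hm; simp at hm
    have h2 : 0 < B m p := by
      rcases lt_or_eq_of_le (hBnn m p) with h' | h'
      · exact h'
      · exfalso; rw [← h'] at hm; simp at hm
    calc |y q - y p| ≤ |y q - y m| + |y m - y p| := abs_sub_le (y q) (y m) (y p)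
      _ ≤ k * t + t := add_le_add (ih q m h1 y t ht hedge) (hedge m p h2)
      _ = (k + 1 : ℕ) * t := by push_cast; ring

set_option maxHeartbeats 2000000 in
/-- **Corollary (contraction of the combination matrix).**
Let `A` be an `n×n` doubly stochastic matrix which is irreducible and aperiodic and
such that `AᵀA` is irreducible (Assumption A1).  Then there is a constant
`s ∈ (0,1)`, depending only on `A`, such that for every vector `c = (c_1,…,c_n)` with
`c_i ∈ [0,1]`, one has `λ_max(I(c) AᵀA I(c)) ≤ 1 − s Σ_{i=1}^n (1 − c_i²)`, where
`I(c) = diag{c_1,…,c_n}`. -/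
theorem diffusion_contraction_corollary
    {n : ℕ} (hn : 1 ≤ n)
    (A : Matrix (Fin n) (Fin n) ℝ)
    (hA_nonneg : ∀ i j, 0 ≤ A i j)
    (hA_row : ∀ i, ∑ j, A i j = 1)
    (hA_col : ∀ j, ∑ i, A i j = 1)
    (hA_prim : ∃ K : ℕ, 1 ≤ K ∧ ∀ i j, 0 < (A ^ K) i j)
    (hA_AtA_irred : ∀ i j, ∃ k : ℕ, 1 ≤ k ∧ 0 < ((Aᵀ * A) ^ k) i j) :
    ∃ s : ℝ, s ∈ Set.Ioo (0 : ℝ) 1 ∧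
      ∀ c : Fin n → ℝ, (∀ i, c i ∈ Set.Icc (0 : ℝ) 1) →
        lambdaMax (Matrix.diagonal c * (Aᵀ * A) * Matrix.diagonal c)
          ≤ 1 - s * ∑ i, (1 - c i ^ 2) := by
  classical
  set B : Matrix (Fin n) (Fin n) ℝ := Aᵀ * A with hBdef
  have hnR : (0 : ℝ) < n := by exact_mod_cast hn
  have hn1R : (1 : ℝ) ≤ n := by exact_mod_cast hn
  have hBnn : ∀ j k, 0 ≤ B j k := by
    intro j k
    rw [hBdef, Matrix.mul_apply]
    exact Finset.sum_nonneg fun i _ => mul_nonneg (hA_nonneg i j) (hA_nonneg i k)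
  have hBrow : ∀ j, ∑ k, B j k = 1 := by
    intro j
    simp only [hBdef, Matrix.mul_apply, Matrix.transpose_apply]
    rw [Finset.sum_comm]
    calc ∑ i, ∑ k, A i j * A i k = ∑ i, A i j * ∑ k, A i k := by
          simp [Finset.mul_sum]
      _ = 1 := by simp [hA_row, hA_col j]
  have hBcol : ∀ k, ∑ j, B j k = 1 := by
    intro k
    simp only [hBdef, Matrix.mul_apply, Matrix.transpose_apply]
    rw [Finset.sum_comm]
    calc ∑ i, ∑ j, A i j * A i k = ∑ i, (∑ j, A i j) * A i k := by
          simp [Finset.sum_mul]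
      _ = 1 := by simp [hA_row, hA_col k]
  have hBdiag : ∀ j, 0 < B j j := by
    intro j
    have hcol := hA_col j
    have : ∃ i, 0 < A i j := by
      by_contra hcon
      push_neg at hcon
      have : (∑ i, A i j) ≤ 0 := Finset.sum_nonpos fun i _ => hcon i
      rw [hcol] at this; linarith
    obtain ⟨i, hi⟩ := this
    rw [hBdef, Matrix.mul_apply]
    have : 0 < Aᵀ j i * A i j := by
      rw [Matrix.transpose_apply]; positivity
    refine lt_of_lt_of_le this ?_
    exact Finset.single_le_sum (fun m _ => mul_nonneg (by rw [Matrix.transpose_apply]; exact hA_nonneg m j) (hA_nonneg m j)) (Finset.mem_univ i)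
  -- choose path lengths
  have hA_AtA_irred' : ∀ i j, ∃ k : ℕ, 1 ≤ k ∧ 0 < (B ^ k) i j := by
    rw [hBdef]; exact hA_AtA_irred
  choose f hf1 hf2 using hA_AtA_irred'
  set K : ℕ := Finset.sup Finset.univ (fun i => Finset.sup Finset.univ (f i)) with hKdef
  have hfK : ∀ q p, f q p ≤ K := by
    intro q p
    have h1 : f q p ≤ Finset.univ.sup (f q) := Finset.le_sup (Finset.mem_univ p)
    have h2 : Finset.univ.sup (f q) ≤ K :=
      Finset.le_sup (f := fun i => Finset.univ.sup (f i)) (Finset.mem_univ q)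
    exact le_trans h1 h2
  have i0 : Fin n := ⟨0, hn⟩
  have hK1 : 1 ≤ K := le_trans (hf1 i0 i0) (hfK i0 i0)
  have hKR : (0 : ℝ) < K := by exact_mod_cast hK1
  clear_value K
  -- minimum positive entry of B
  set P : Finset (Fin n × Fin n) :=
    Finset.filter (fun pr : Fin n × Fin n => 0 < B pr.1 pr.2) Finset.univ with hPdef
  have hPne : P.Nonempty := ⟨(i0, i0), by simp [hPdef, hBdiag i0]⟩
  set β : ℝ := P.inf' hPne (fun pr => B pr.1 pr.2) with hβdef
  have hβpos : 0 < β := by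
    rw [hβdef, Finset.lt_inf'_iff]
    intro pr hpr
    rw [hPdef, Finset.mem_filter] at hpr
    exact hpr.2
  have hβle : ∀ a b, 0 < B a b → β ≤ B a b := by
    intro a b hab
    have hmem : (a, b) ∈ P := by
      rw [hPdef, Finset.mem_filter]
      exact ⟨Finset.mem_univ _, hab⟩
    exact Finset.inf'_le _ hmem
  clear_value β
  clear hPdef
  clear_value B
  -- the constant
  set s' : ℝ := min (1 / (8 * n)) (β / (16 * n * K ^ 2)) with hs'def
  have hs'pos : 0 < s' := by
    apply lt_min
    · positivity
    · positivity
  have hs'le : s' ≤ 1 / (8 * n) := min_le_left _ _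
  have hs'le2 : s' ≤ β / (16 * n * K ^ 2) := min_le_right _ _
  clear_value s'
  refine ⟨s' / n, ⟨by positivity, ?_⟩, ?_⟩
  · have h1 : s' / n ≤ s' := by
      rw [div_le_iff₀ hnR]
      nlinarith [hs'pos, hn1R]
    have h2 : s' ≤ 1 / 8 := by
      refine le_trans hs'le ?_
      rw [div_le_div_iff₀ (by positivity) (by norm_num)]
      nlinarith [hn1R]
    linarith
  intro c hc
  have hc2 : ∀ i, 0 ≤ 1 - c i ^ 2 ∧ 1 - c i ^ 2 ≤ 1 := by
    intro i
    obtain ⟨h0, h1⟩ := hc i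
    constructor <;> nlinarith
  apply Real.sSup_le
  swap
  · -- 0 ≤ 1 - s'/n * Σ
    have hsum : ∑ i, (1 - c i ^ 2) ≤ (n : ℝ) := by
      calc ∑ i, (1 - c i ^ 2) ≤ ∑ _i : Fin n, (1:ℝ) := Finset.sum_le_sum fun i _ => (hc2 i).2
        _ = (n : ℝ) := by simp
    have hsumnn : 0 ≤ ∑ i, (1 - c i ^ 2) := Finset.sum_nonneg fun i _ => (hc2 i).1
    have : s' / n * ∑ i, (1 - c i ^ 2) ≤ s' / n * n := by
      apply mul_le_mul_of_nonneg_left hsum (by positivity)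
    have heq : s' / n * n = s' := by field_simp
    have h2 : s' ≤ 1 / 8 := by
      refine le_trans hs'le ?_
      rw [div_le_div_iff₀ (by positivity) (by norm_num)]
      nlinarith [hn1R]
    linarith
  intro r hr
  obtain ⟨x, hx, hrx⟩ := hr
  set y : Fin n → ℝ := fun i => c i * x i with hydef
  clear_value y
  -- Rayleigh quotient as double sum
  have hr_eq : r = ∑ j, ∑ k, y j * B j k * y k := by
    rw [hrx]
    simp only [dotProduct, Matrix.mulVec, Matrix.mul_diagonal, Matrix.diagonal_mul,
      Finset.mul_sum]
    refine Finset.sum_congr rfl fun j _ => Finset.sum_congr rfl fun k _ => ?_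
    simp only [hydef]
    ring
  set T1 : ℝ := ∑ i, (1 - c i ^ 2) * x i ^ 2 with hT1def
  set S : ℝ := ∑ j, ∑ k, B j k * (y j - y k) ^ 2 with hSdef
  clear_value T1 S
  have hT1nn : 0 ≤ T1 := by
    rw [hT1def]
    exact Finset.sum_nonneg fun i _ => mul_nonneg (hc2 i).1 (sq_nonneg _)
  have hSnn : 0 ≤ S := by
    rw [hSdef]
    exact Finset.sum_nonneg fun j _ => Finset.sum_nonneg fun k _ =>
      mul_nonneg (hBnn j k) (sq_nonneg _)
  -- the identity 1 - r = T1 + S/2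
  have hysum : ∑ i, y i ^ 2 = 1 - T1 := by
    rw [hT1def]
    have : ∑ i, (1 - c i ^ 2) * x i ^ 2 = (∑ i, x i ^ 2) - ∑ i, y i ^ 2 := by
      rw [← Finset.sum_sub_distrib]
      refine Finset.sum_congr rfl fun i _ => ?_
      simp only [hydef]; ring
    rw [this, hx]; ring
  have hSid : S = 2 * (∑ i, y i ^ 2) - 2 * r := by
    have expand : ∀ j k : Fin n, B j k * (y j - y k) ^ 2
        = y j ^ 2 * B j k + y k ^ 2 * B j k - 2 * (y j * B j k * y k) := by
      intro j k; ring
    rw [hSdef]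
    simp_rw [expand]
    rw [hr_eq]
    have e1 : ∑ j, ∑ k, (y j ^ 2 * B j k + y k ^ 2 * B j k - 2 * (y j * B j k * y k))
        = (∑ j, ∑ k, y j ^ 2 * B j k) + (∑ j, ∑ k, y k ^ 2 * B j k)
          - 2 * ∑ j, ∑ k, y j * B j k * y k := by
      simp_rw [Finset.sum_sub_distrib, Finset.sum_add_distrib, Finset.mul_sum]
    rw [e1]
    have e2 : ∑ j, ∑ k, y j ^ 2 * B j k = ∑ j, y j ^ 2 := by
      refine Finset.sum_congr rfl fun j _ => ?_
      rw [← Finset.mul_sum, hBrow j, mul_one]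
    have e3 : ∑ j : Fin n, ∑ k, y k ^ 2 * B j k = ∑ k, y k ^ 2 := by
      rw [Finset.sum_comm]
      refine Finset.sum_congr rfl fun k _ => ?_
      rw [← Finset.mul_sum, hBcol k, mul_one]
    rw [e2, e3]; ring
  have hid : 1 - r = T1 + S / 2 := by
    rw [hSid, hysum]; ring
  -- key pointwise bound
  have hkey : ∀ p : Fin n, s' * (1 - c p ^ 2) ≤ T1 + S / 2 := by
    intro p
    -- find q with big x q ^ 2
    have hq : ∃ q : Fin n, 1 / (n : ℝ) ≤ x q ^ 2 := by
      by_contra hcon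
      push_neg at hcon
      have : (1 : ℝ) < 1 := by
        calc (1:ℝ) = ∑ i, x i ^ 2 := hx.symm
          _ < ∑ _i : Fin n, (1 / (n:ℝ)) :=
              Finset.sum_lt_sum_of_nonempty ⟨i0, Finset.mem_univ i0⟩ fun i _ => hcon i
          _ = 1 := by rw [Finset.sum_const, Finset.card_univ, Fintype.card_fin, nsmul_eq_mul]; field_simp
      linarith
    obtain ⟨q, hq⟩ := hq
    have htp0 : 0 ≤ 1 - c p ^ 2 := (hc2 p).1
    have htp1 : 1 - c p ^ 2 ≤ 1 := (hc2 p).2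
    by_cases hcq : c q ^ 2 ≤ 1 / 2
    · -- T1 ≥ 1/(2n) ≥ s'
      have hterm : 1 / (2 * (n:ℝ)) ≤ (1 - c q ^ 2) * x q ^ 2 := by
        have h1 : (1:ℝ)/2 ≤ 1 - c q ^ 2 := by linarith
        calc 1 / (2 * (n:ℝ)) = (1/2) * (1/(n:ℝ)) := by ring
          _ ≤ (1 - c q ^ 2) * x q ^ 2 :=
              mul_le_mul h1 hq (by positivity) (by linarith)
      have hT1 : 1 / (2 * (n:ℝ)) ≤ T1 := by
        refine le_trans hterm ?_
        rw [hT1def]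
        exact Finset.single_le_sum (fun i _ => mul_nonneg (hc2 i).1 (sq_nonneg _)) (Finset.mem_univ q)
      have : s' * (1 - c p ^ 2) ≤ s' := mul_le_of_le_one_right (le_of_lt hs'pos) htp1
      have hs2 : s' ≤ 1 / (2 * (n:ℝ)) := by
        refine le_trans hs'le ?_
        rw [div_le_div_iff₀ (by positivity) (by positivity)]
        linarith [hnR]
      linarith
    · push_neg at hcq
      by_cases hp : 1 / (8 * (n:ℝ)) ≤ x p ^ 2
      · -- T1 ≥ (1 - c p^2) / (8n)
        have hterm : (1 - c p ^ 2) * (1 / (8 * (n:ℝ))) ≤ (1 - c p ^ 2) * x p ^ 2 :=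
          mul_le_mul_of_nonneg_left hp htp0
        have hT1 : (1 - c p ^ 2) * (1 / (8 * (n:ℝ))) ≤ T1 := by
          refine le_trans hterm ?_
          rw [hT1def]
          exact Finset.single_le_sum (fun i _ => mul_nonneg (hc2 i).1 (sq_nonneg _)) (Finset.mem_univ p)
        have h3 : s' * (1 - c p ^ 2) ≤ (1 / (8 * (n:ℝ))) * (1 - c p ^ 2) :=
          mul_le_mul_of_nonneg_right hs'le htp0
        linarith [hT1, h3, hSnn]
      · push_neg at hp
        -- y q ^ 2 ≥ 1/(2n), y p ^2 < 1/(8n)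
        have hyq : 1 / (2 * (n:ℝ)) ≤ y q ^ 2 := by
          have : y q ^ 2 = c q ^ 2 * x q ^ 2 := by simp only [hydef]; ring
          rw [this]
          calc 1 / (2 * (n:ℝ)) = (1/2) * (1/(n:ℝ)) := by ring
            _ ≤ c q ^ 2 * x q ^ 2 := by
                apply mul_le_mul (le_of_lt hcq) hq (by positivity) (by positivity)
        have hyp : y p ^ 2 ≤ 1 / (8 * (n:ℝ)) := by
          have h1 : y p ^ 2 = c p ^ 2 * x p ^ 2 := by simp only [hydef]; ring
          rw [h1]
          have h2 : c p ^ 2 ≤ 1 := by linarith [htp0]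
          calc c p ^ 2 * x p ^ 2 ≤ 1 * x p ^ 2 :=
                mul_le_mul_of_nonneg_right h2 (sq_nonneg _)
            _ ≤ 1 / (8 * (n:ℝ)) := by linarith [hp]
        have hdiff : 1 / (8 * (n:ℝ)) ≤ (y q - y p) ^ 2 := by
          have e : 2 * (y q - y p) ^ 2 - y q ^ 2 + 2 * y p ^ 2 = (y q - 2 * y p) ^ 2 := by
            ring
          have hrel : 1 / (2 * (n:ℝ)) = 4 * (1 / (8 * (n:ℝ))) := by ring
          linarith [sq_nonneg (y q - 2 * y p), e, hrel, hyq, hyp]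
        -- edge bound
        have hedge : ∀ a b, 0 < B a b → |y a - y b| ≤ Real.sqrt (S / β) := by
          intro a b hab
          have hterm : B a b * (y a - y b) ^ 2 ≤ S := by
            rw [hSdef]
            calc B a b * (y a - y b) ^ 2
                ≤ ∑ k, B a k * (y a - y k) ^ 2 :=
                  Finset.single_le_sum (f := fun k => B a k * (y a - y k) ^ 2)
                    (fun k _ => mul_nonneg (hBnn a k) (sq_nonneg _)) (Finset.mem_univ b)
              _ ≤ ∑ j, ∑ k, B j k * (y j - y k) ^ 2 :=
                  Finset.single_le_sum (f := fun j => ∑ k, B j k * (y j - y k) ^ 2)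
                    (fun j _ => Finset.sum_nonneg fun k _ =>
                      mul_nonneg (hBnn j k) (sq_nonneg _)) (Finset.mem_univ a)
          have hd : (y a - y b) ^ 2 ≤ S / β := by
            rw [le_div_iff₀ hβpos]
            calc (y a - y b) ^ 2 * β ≤ (y a - y b) ^ 2 * B a b :=
                  mul_le_mul_of_nonneg_left (hβle a b hab) (sq_nonneg _)
              _ = B a b * (y a - y b) ^ 2 := by ring
              _ ≤ S := hterm
          calc |y a - y b| = Real.sqrt ((y a - y b) ^ 2) := (Real.sqrt_sq_eq_abs _).symm
            _ ≤ Real.sqrt (S / β) := Real.sqrt_le_sqrt hd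
        have hpath := path_bound B hBnn (f q p) q p (hf2 q p) y (Real.sqrt (S / β))
          (Real.sqrt_nonneg _) hedge
        have hKpath : |y q - y p| ≤ K * Real.sqrt (S / β) := by
          refine le_trans hpath ?_
          apply mul_le_mul_of_nonneg_right _ (Real.sqrt_nonneg _)
          exact_mod_cast hfK q p
        have hsq : (y q - y p) ^ 2 ≤ (K:ℝ) ^ 2 * (S / β) := by
          have h1 : |y q - y p| ^ 2 ≤ ((K:ℝ) * Real.sqrt (S / β)) ^ 2 := by
            apply pow_le_pow_left₀ (abs_nonneg _) hKpath
          rw [sq_abs] at h1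
          rw [mul_pow, Real.sq_sqrt (by positivity)] at h1
          exact h1
        have hhalf : β / (16 * (n:ℝ) * K ^ 2) ≤ S / 2 := by
          have h1 : 1 / (8 * (n:ℝ)) ≤ (K:ℝ) ^ 2 * (S / β) := le_trans hdiff hsq
          have h2 : (K:ℝ) ^ 2 * (S / β) = (K:ℝ) ^ 2 * S / β := by ring
          rw [h2, div_le_div_iff₀ (by positivity) hβpos] at h1
          rw [div_le_div_iff₀ (by positivity) (by norm_num)]
          nlinarith [h1]
        have hs2 : s' ≤ β / (16 * (n:ℝ) * K ^ 2) := hs'le2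
        have : s' * (1 - c p ^ 2) ≤ s' := mul_le_of_le_one_right (le_of_lt hs'pos) htp1
        linarith
  -- sum over p and conclude
  have hsum := Finset.sum_le_sum fun p (_ : p ∈ Finset.univ) => hkey p
  rw [← Finset.mul_sum, Finset.sum_const, Finset.card_univ, Fintype.card_fin,
    nsmul_eq_mul] at hsum
  have hfin : s' / n * ∑ i, (1 - c i ^ 2) ≤ T1 + S / 2 := by
    rw [div_mul_eq_mul_div, div_le_iff₀ hnR]
    calc s' * ∑ i, (1 - c i ^ 2) ≤ (n:ℝ) * (T1 + S / 2) := hsum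
      _ = (T1 + S / 2) * n := by ring
  linarith [hid, hfin]
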